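/- For every fixed r ≥ 1, the polynomials p_{n,r}(t) := t·J_{n,r}(t) satisfy p_{r,r}(t) = t and, for all n > r, the recurrence p_{n,r}(t) = n·t·p_{n−1,r}(t) + t·(1−t)·p'_{n−1,r}(t), where p' denotes the derivative with respect to t. -/

import Mathlib

open Finset
open scoped Classical

/-- Number of excedances of a function `f` from `{1, …, s}` to `{1, …, n}`
(0-indexed encoding): positions `i` with `f i > i`. -/
noncomputable def excCount {s n : ℕ} (f : Fin s → Fin n) : ℕ :=
  (univ.filter fun i : Fin s => (i : ℕ) < (f i : ℕ)).card

/-- `J_{n,r}(t) = ∑_f t^exc(f)`, summing over all injections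
`f : {1, …, n-r} → {1, …, n}`, as a polynomial over `ℚ`. -/
noncomputable def Jpoly (n r : ℕ) : Polynomial ℚ :=
  ∑ f ∈ univ.filter (fun f : Fin (n - r) → Fin n => Function.Injective f),
    Polynomial.X ^ excCount f

/-- `p_{n,r}(t) = t · J_{n,r}(t)`. -/
noncomputable def pPoly (n r : ℕ) : Polynomial ℚ := Polynomial.X * Jpoly n r

open Polynomial

namespace PP

variable {s n : ℕ}

/-- insertion map -/
noncomputable def phi (g : Fin s → Fin n) (j : Fin (n + 1)) : Fin (s + 1) → Fin (n + 1) :=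
  fun i => if hi : (i : ℕ) < s then
      (if (g ⟨i, hi⟩ : ℕ) = (j : ℕ) then Fin.last n else (g ⟨i, hi⟩).castSucc)
    else j

/-- deletion map -/
noncomputable def psi (hn : 0 < n) (f : Fin (s + 1) → Fin (n + 1)) : Fin s → Fin n :=
  fun i => if (f i.castSucc : ℕ) = n
    then (if h : (f (Fin.last s) : ℕ) < n then ⟨_, h⟩ else ⟨0, hn⟩)
    else (if h : (f i.castSucc : ℕ) < n then ⟨_, h⟩ else ⟨0, hn⟩)

lemma phi_castSucc (g : Fin s → Fin n) (j : Fin (n + 1)) (i : Fin s) :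
    phi g j i.castSucc =
      if (g i : ℕ) = (j : ℕ) then Fin.last n else (g i).castSucc := by
  have hi : ((i.castSucc : Fin (s + 1)) : ℕ) < s := by simpa using i.isLt
  show (if hi : ((i.castSucc : Fin (s+1)) : ℕ) < s then _ else _) = _
  rw [dif_pos hi]
  have he : (⟨((i.castSucc : Fin (s+1)) : ℕ), hi⟩ : Fin s) = i := by
    apply Fin.ext; simp
  rw [he]

lemma phi_last (g : Fin s → Fin n) (j : Fin (n + 1)) : phi g j (Fin.last s) = j := by
  show (if hi : ((Fin.last s : Fin (s+1)) : ℕ) < s then _ else _) = _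
  rw [dif_neg (by simp)]

lemma phi_inj {g : Fin s → Fin n} (hg : Function.Injective g) (j : Fin (n + 1)) :
    Function.Injective (phi g j) := by
  intro a b hab
  simp only [phi] at hab
  by_cases ha : (a : ℕ) < s <;> by_cases hb : (b : ℕ) < s
  · rw [dif_pos ha, dif_pos hb] at hab
    split_ifs at hab with h1 h2 h2
    · have hgab : g ⟨a, ha⟩ = g ⟨b, hb⟩ := Fin.ext (h1.trans h2.symm)
      have h := hg hgab
      simp only [Fin.mk.injEq] at h
      exact Fin.ext h
    · have := congrArg Fin.val hab
      simp only [Fin.val_last, Fin.coe_castSucc] at this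
      exact absurd this.symm (Nat.ne_of_lt (g ⟨b, hb⟩).isLt)
    · have := congrArg Fin.val hab
      simp only [Fin.val_last, Fin.coe_castSucc] at this
      exact absurd this (Nat.ne_of_lt (g ⟨a, ha⟩).isLt)
    · have hgab : g ⟨a, ha⟩ = g ⟨b, hb⟩ := Fin.castSucc_injective _ hab
      have h := hg hgab
      simp only [Fin.mk.injEq] at h
      exact Fin.ext h
  · rw [dif_pos ha, dif_neg hb] at hab
    split_ifs at hab with h1
    · have := congrArg Fin.val hab
      simp only [Fin.val_last] at this
      exfalso
      have hlt := (g ⟨a, ha⟩).isLt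
      omega
    · have := congrArg Fin.val hab
      simp only [Fin.coe_castSucc] at this
      exact absurd this h1
  · rw [dif_neg ha, dif_pos hb] at hab
    split_ifs at hab with h1
    · have := congrArg Fin.val hab
      simp only [Fin.val_last] at this
      exfalso
      have hlt := (g ⟨b, hb⟩).isLt
      omega
    · have := congrArg Fin.val hab
      simp only [Fin.coe_castSucc] at this
      exact absurd this.symm h1
  · have h1 := a.isLt
    have h2 := b.isLt
    exact Fin.ext (by omega)

lemma psi_phi (hn : 0 < n) {g : Fin s → Fin n} (j : Fin (n + 1)) :
    psi hn (phi g j) = g := by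
  funext i
  have h1 : phi g j i.castSucc =
      if (g i : ℕ) = (j : ℕ) then Fin.last n else (g i).castSucc := phi_castSucc g j i
  have h2 : phi g j (Fin.last s) = j := phi_last g j
  by_cases hgj : (g i : ℕ) = (j : ℕ)
  · have hv : (phi g j i.castSucc : ℕ) = n := by rw [h1, if_pos hgj]; simp
    have hjlt : (phi g j (Fin.last s) : ℕ) < n := by
      rw [h2, ← hgj]; exact (g i).isLt
    simp only [psi, if_pos hv, dif_pos hjlt]
    apply Fin.ext
    show (phi g j (Fin.last s) : ℕ) = (g i : ℕ)
    rw [h2]; exact hgj.symm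
  · have hlt : (phi g j i.castSucc : ℕ) < n := by
      rw [h1, if_neg hgj]
      simpa using (g i).isLt
    have hv : ¬ (phi g j i.castSucc : ℕ) = n := by omega
    simp only [psi, if_neg hv, dif_pos hlt]
    apply Fin.ext
    show (phi g j i.castSucc : ℕ) = (g i : ℕ)
    rw [h1, if_neg hgj]; simp

lemma phi_psi (hn : 0 < n) {f : Fin (s + 1) → Fin (n + 1)} (hf : Function.Injective f) :
    phi (psi hn f) (f (Fin.last s)) = f := by
  funext i
  by_cases hi : (i : ℕ) < s
  · have hil : i = Fin.castSucc ⟨(i : ℕ), hi⟩ := Fin.ext (by simp)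
    rw [hil, phi_castSucc]
    set i' : Fin s := ⟨(i : ℕ), hi⟩ with hi'
    have hne : i'.castSucc ≠ Fin.last s := by
      apply Fin.ne_of_val_ne; simp [Fin.val_last]; omega
    by_cases hc : (f i'.castSucc : ℕ) = n
    · have hfl : (f (Fin.last s) : ℕ) < n := by
        have h3 : f (Fin.last s) ≠ f i'.castSucc := fun h => hne (hf h).symm
        have h4 := (f (Fin.last s)).isLt
        have h5 : (f (Fin.last s) : ℕ) ≠ n := by
          intro h
          exact h3 (Fin.ext (by rw [h, hc]))
        omega
      have hpsi : (psi hn f i' : ℕ) = (f (Fin.last s) : ℕ) := by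
        simp only [psi, if_pos hc, dif_pos hfl]
      rw [if_pos hpsi]
      exact (Fin.ext (by simp [Fin.val_last, hc])).symm
    · have hlt : (f i'.castSucc : ℕ) < n := by
        have := (f i'.castSucc).isLt; omega
      have hpsi : (psi hn f i' : ℕ) = (f i'.castSucc : ℕ) := by
        simp only [psi, if_neg hc, dif_pos hlt]
      have hne2 : (psi hn f i' : ℕ) ≠ ((f (Fin.last s)) : ℕ) := by
        rw [hpsi]
        intro h
        have := hf (Fin.ext h : f i'.castSucc = f (Fin.last s))
        exact hne this
      rw [if_neg hne2]
      exact Fin.ext (by simp [hpsi])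
  · have hil : i = Fin.last s := by
      have := i.isLt; exact Fin.ext (by simp [Fin.val_last]; omega)
    rw [hil, phi_last]

lemma psi_inj (hn : 0 < n) {f : Fin (s + 1) → Fin (n + 1)} (hf : Function.Injective f) :
    Function.Injective (psi hn f) := by
  intro a b hab
  have h1 := phi_psi hn hf
  have h2 : phi (psi hn f) (f (Fin.last s)) a.castSucc
      = phi (psi hn f) (f (Fin.last s)) b.castSucc := by
    rw [phi_castSucc, phi_castSucc, hab]
  rw [h1] at h2
  have := hf h2
  exact Fin.castSucc_injective _ this

/-- the "no extra excedance" condition -/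
def good (g : Fin s → Fin n) (j : Fin (n + 1)) : Prop :=
  (j : ℕ) ≤ s ∧ ∀ i : Fin s, (g i : ℕ) = (j : ℕ) → (i : ℕ) < (j : ℕ)

lemma excCount_eq_sum {s n : ℕ} (f : Fin s → Fin n) :
    excCount f = ∑ i : Fin s, if (i : ℕ) < (f i : ℕ) then 1 else 0 :=
  Finset.card_filter _ _

lemma exc_phi_good (hsn : s < n) {g : Fin s → Fin n} (j : Fin (n + 1))
    (hA : good g j) : excCount (phi g j) = excCount g := by
  rw [excCount_eq_sum, Fin.sum_univ_castSucc, excCount_eq_sum]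
  have hlast : (if ((Fin.last s : Fin (s + 1)) : ℕ) < ((phi g j (Fin.last s)) : ℕ)
      then 1 else 0) = 0 := by
    rw [phi_last, if_neg]
    simp only [Fin.val_last]
    have := hA.1
    omega
  rw [hlast, add_zero]
  apply Finset.sum_congr rfl
  intro i _
  rw [phi_castSucc]
  by_cases hgj : (g i : ℕ) = (j : ℕ)
  · rw [if_pos hgj]
    have hij := hA.2 i hgj
    have h1 : ((i.castSucc : Fin (s + 1)) : ℕ) < ((Fin.last n : Fin (n + 1)) : ℕ) := by
      simp only [Fin.coe_castSucc, Fin.val_last]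
      have := i.isLt
      omega
    rw [if_pos h1, if_pos (by omega : (i : ℕ) < (g i : ℕ))]
  · rw [if_neg hgj]
    simp only [Fin.coe_castSucc]

lemma exc_phi_bad (hsn : s < n) {g : Fin s → Fin n} (hg : Function.Injective g)
    (j : Fin (n + 1)) (hA : ¬ good g j) : excCount (phi g j) = excCount g + 1 := by
  have hA' : s < (j : ℕ) ∨ ∃ i : Fin s, (g i : ℕ) = (j : ℕ) ∧ (j : ℕ) ≤ (i : ℕ) := by
    by_contra hc
    push_neg at hc
    exact hA ⟨hc.1, fun i h => hc.2 i h⟩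
  rw [excCount_eq_sum, Fin.sum_univ_castSucc, excCount_eq_sum]
  rcases hA' with h | ⟨i₀, hgi₀, hji₀⟩
  · have hlast : (if ((Fin.last s : Fin (s + 1)) : ℕ) < ((phi g j (Fin.last s)) : ℕ)
        then 1 else 0) = 1 := by
      rw [phi_last, if_pos]
      simp only [Fin.val_last]
      omega
    rw [hlast]
    congr 1
    apply Finset.sum_congr rfl
    intro i _
    rw [phi_castSucc]
    by_cases hgj : (g i : ℕ) = (j : ℕ)
    · rw [if_pos hgj]
      have hi := i.isLt
      have h1 : ((i.castSucc : Fin (s + 1)) : ℕ) < ((Fin.last n : Fin (n + 1)) : ℕ) := by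
        simp only [Fin.coe_castSucc, Fin.val_last]
        omega
      rw [if_pos h1, if_pos (by omega : (i : ℕ) < (g i : ℕ))]
    · rw [if_neg hgj]
      simp only [Fin.coe_castSucc]
  · have hi₀lt := i₀.isLt
    have hlast : (if ((Fin.last s : Fin (s + 1)) : ℕ) < ((phi g j (Fin.last s)) : ℕ)
        then 1 else 0) = 0 := by
      rw [phi_last, if_neg]
      simp only [Fin.val_last]
      omega
    rw [hlast, add_zero]
    rw [← Finset.sum_erase_add univ _ (Finset.mem_univ i₀),
      ← Finset.sum_erase_add univ
        (fun i : Fin s => if (i : ℕ) < (g i : ℕ) then 1 else 0) (Finset.mem_univ i₀)]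
    have hterm_phi : (if ((i₀.castSucc : Fin (s + 1)) : ℕ) < ((phi g j i₀.castSucc) : ℕ)
        then 1 else 0) = 1 := by
      rw [phi_castSucc, if_pos hgi₀, if_pos]
      simp only [Fin.coe_castSucc, Fin.val_last]
      omega
    have hterm_g : (if (i₀ : ℕ) < (g i₀ : ℕ) then 1 else 0) = 0 := by
      rw [if_neg]
      omega
    rw [hterm_phi, hterm_g, add_zero]
    congr 1
    apply Finset.sum_congr rfl
    intro i hi
    have hne : i ≠ i₀ := (Finset.mem_erase.mp hi).1
    have hgj : ¬ (g i : ℕ) = (j : ℕ) := by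
      intro hh
      exact hne (hg (Fin.ext (hh.trans hgi₀.symm)))
    rw [phi_castSucc, if_neg hgj]
    simp only [Fin.coe_castSucc]

lemma exc_le (g : Fin s → Fin n) : excCount g ≤ s := by
  exact le_trans (Finset.card_filter_le _ _) (by simp)

lemma card_good (hsn : s < n) {g : Fin s → Fin n} (hg : Function.Injective g) :
    (univ.filter fun j : Fin (n + 1) => good g j).card = excCount g + 1 := by
  classical
  set k := excCount g with hk
  have hks : k ≤ s := exc_le g
  set B : Finset (Fin (n + 1)) := univ.filter (fun j => (j : ℕ) ≤ s) with hB
  set Nn : Finset (Fin (n + 1)) :=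
    (univ.filter fun i : Fin s => ¬ (i : ℕ) < (g i : ℕ)).image
      (fun i => (g i).castSucc) with hN
  have hNB : Nn ⊆ B := by
    intro x hx
    simp only [hN, Finset.mem_image, Finset.mem_filter, Finset.mem_univ, true_and] at hx
    obtain ⟨i, hi, rfl⟩ := hx
    simp only [hB, Finset.mem_filter, Finset.mem_univ, true_and, Fin.coe_castSucc]
    have := i.isLt
    omega
  have hgoodeq : univ.filter (good g) = B \ Nn := by
    ext j
    rw [Finset.mem_filter, Finset.mem_sdiff]
    simp only [Finset.mem_univ, true_and]
    constructor
    · rintro ⟨h1, h2⟩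
      constructor
      · rw [hB]
        simp only [Finset.mem_filter, Finset.mem_univ, true_and]
        exact h1
      · rw [hN]
        simp only [Finset.mem_image, Finset.mem_filter, Finset.mem_univ, true_and,
          not_exists, not_and]
        intro i hi hij
        have hv : (g i : ℕ) = (j : ℕ) := by
          rw [← hij]; simp
        have := h2 i hv
        omega
    · rintro ⟨h1, h2⟩
      rw [hB] at h1
      simp only [Finset.mem_filter, Finset.mem_univ, true_and] at h1
      rw [hN] at h2
      simp only [Finset.mem_image, Finset.mem_filter, Finset.mem_univ, true_and,
        not_exists, not_and] at h2
      refine ⟨h1, fun i hgi => ?_⟩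
      by_contra hc
      push_neg at hc
      exact h2 i (by omega) (Fin.ext (by simpa using hgi))
  have hBcard : B.card = s + 1 := by
    have himg : B = Finset.image (fun x : Fin (s + 1) => Fin.castLE (by omega : s + 1 ≤ n + 1) x) univ := by
      ext j
      simp only [hB, Finset.mem_filter, Finset.mem_univ, true_and, Finset.mem_image]
      constructor
      · intro hj
        exact ⟨⟨(j : ℕ), by omega⟩, Fin.ext (by simp)⟩
      · rintro ⟨x, rfl⟩
        have := x.isLt
        simp only [Fin.coe_castLE]
        omega
    rw [himg, Finset.card_image_of_injective _ (Fin.castLE_injective _)]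
    simp
  have hNcard : Nn.card = s - k := by
    rw [hN, Finset.card_image_of_injective _
      (fun a b h => hg (Fin.castSucc_injective _ h))]
    have := Finset.card_filter_add_card_filter_not
      (s := (univ : Finset (Fin s))) (fun i : Fin s => (i : ℕ) < (g i : ℕ))
    simp only [Finset.card_univ, Fintype.card_fin] at this
    have hkk : (univ.filter fun i : Fin s => (i : ℕ) < (g i : ℕ)).card = k := rfl
    omega
  rw [hgoodeq, Finset.card_sdiff_of_subset hNB, hBcard, hNcard]
  omega

lemma sum_phi (hsn : s < n) {g : Fin s → Fin n} (hg : Function.Injective g) :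
    (∑ j : Fin (n + 1), (X : ℚ[X]) ^ excCount (phi g j))
      = C ((excCount g : ℚ) + 1) * X ^ excCount g
        + C ((n : ℚ) - excCount g) * X ^ (excCount g + 1) := by
  classical
  set k := excCount g with hk
  have hks : k ≤ s := exc_le g
  have hkn : k ≤ n := by omega
  rw [← Finset.sum_filter_add_sum_filter_not univ (good g)
    (fun j => (X : ℚ[X]) ^ excCount (phi g j))]
  have h1 : ∑ j ∈ univ.filter (good g), (X : ℚ[X]) ^ excCount (phi g j)
      = (k + 1) • (X : ℚ[X]) ^ k := by
    rw [Finset.sum_congr rfl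
      (fun j hj => by rw [exc_phi_good hsn j (Finset.mem_filter.mp hj).2])]
    rw [Finset.sum_const, card_good hsn hg]
  have hcard2 : (univ.filter fun j : Fin (n + 1) => ¬ good g j).card = n - k := by
    have := Finset.card_filter_add_card_filter_not
      (s := (univ : Finset (Fin (n + 1)))) (good g)
    rw [card_good hsn hg] at this
    simp only [Finset.card_univ, Fintype.card_fin] at this
    omega
  have h2 : ∑ j ∈ univ.filter (fun j => ¬ good g j), (X : ℚ[X]) ^ excCount (phi g j)
      = (n - k) • (X : ℚ[X]) ^ (k + 1) := by
    rw [Finset.sum_congr rfl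
      (fun j hj => by rw [exc_phi_bad hsn hg j (Finset.mem_filter.mp hj).2])]
    rw [Finset.sum_const, hcard2]
  rw [h1, h2, nsmul_eq_mul, nsmul_eq_mul]
  have e1 : Polynomial.C ((k : ℚ) + 1) = (((k + 1 : ℕ) : ℚ[X])) := by
    rw [← map_natCast (Polynomial.C : ℚ →+* ℚ[X]) (k + 1)]
    congr 1
    push_cast
    ring
  have e2 : Polynomial.C ((n : ℚ) - (k : ℚ)) = (((n - k : ℕ) : ℚ[X])) := by
    rw [← map_natCast (Polynomial.C : ℚ →+* ℚ[X]) (n - k)]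
    congr 1
    rw [Nat.cast_sub hkn]
  rw [e1, e2]

lemma key (hsn : s < n) :
    (∑ f ∈ univ.filter (fun f : Fin (s + 1) → Fin (n + 1) => Function.Injective f),
        (X : ℚ[X]) ^ excCount f)
      = ∑ g ∈ univ.filter (fun g : Fin s → Fin n => Function.Injective g),
          (C ((excCount g : ℚ) + 1) * X ^ excCount g
            + C ((n : ℚ) - excCount g) * X ^ (excCount g + 1)) := by
  classical
  have hn : 0 < n := by omega
  have step : (∑ f ∈ univ.filter (fun f : Fin (s + 1) → Fin (n + 1) => Function.Injective f),
        (X : ℚ[X]) ^ excCount f)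
      = ∑ p ∈ (univ.filter (fun g : Fin s → Fin n => Function.Injective g)) ×ˢ
          (univ : Finset (Fin (n + 1))), (X : ℚ[X]) ^ excCount (phi p.1 p.2) := by
    refine Finset.sum_bij' (fun f _ => (psi hn f, f (Fin.last s)))
      (fun p _ => phi p.1 p.2) ?_ ?_ ?_ ?_ ?_
    · intro f hf
      have hfi : Function.Injective f := (Finset.mem_filter.mp hf).2
      rw [Finset.mem_product]
      exact ⟨Finset.mem_filter.mpr ⟨Finset.mem_univ _, psi_inj hn hfi⟩, Finset.mem_univ _⟩
    · intro p hp
      rw [Finset.mem_product] at hp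
      exact Finset.mem_filter.mpr
        ⟨Finset.mem_univ _, phi_inj (Finset.mem_filter.mp hp.1).2 p.2⟩
    · intro f hf
      exact phi_psi hn (Finset.mem_filter.mp hf).2
    · intro p hp
      have h1 : psi hn (phi p.1 p.2) = p.1 := psi_phi hn p.2
      have h2 : phi p.1 p.2 (Fin.last s) = p.2 := phi_last p.1 p.2
      exact Prod.ext h1 h2
    · intro f hf
      rw [phi_psi hn (Finset.mem_filter.mp hf).2]
  rw [step, Finset.sum_product]
  exact Finset.sum_congr rfl (fun g hg => sum_phi hsn (Finset.mem_filter.mp hg).2)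

end PP

/-- For fixed `r ≥ 1`: `p_{r,r}(t) = t` and, for `n > r`,
`p_{n,r}(t) = n t p_{n-1,r}(t) + t (1 - t) p'_{n-1,r}(t)`. -/
theorem pPoly_recurrence (r : ℕ) (hr : 1 ≤ r) :
    pPoly r r = Polynomial.X ∧
    ∀ n : ℕ, r < n →
      pPoly n r
        = Polynomial.C (n : ℚ) * Polynomial.X * pPoly (n - 1) r
          + Polynomial.X * (1 - Polynomial.X) * Polynomial.derivative (pPoly (n - 1) r) := by
  constructor
  · have h1 : Jpoly r r = 1 := by
      rw [Jpoly, Nat.sub_self]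
      have hall : ∀ f : Fin 0 → Fin r, Function.Injective f := fun f a b _ => a.elim0
      rw [Finset.filter_true_of_mem (fun f _ => hall f)]
      have hz : ∀ f : Fin 0 → Fin r, excCount f = 0 := by
        intro f
        simp [excCount]
      rw [Finset.sum_congr rfl (fun f _ => by rw [hz f, pow_zero])]
      rw [Finset.sum_const]
      simp
    rw [pPoly, h1, mul_one]
  · intro n hn
    obtain ⟨m, rfl⟩ : ∃ m, n = m + 1 := ⟨n - 1, by omega⟩
    have hrm : r ≤ m := by omega
    have hsm : m - r < m := by omega
    simp only [Nat.add_sub_cancel]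
    have hJ : Jpoly (m + 1) r
        = ∑ g ∈ univ.filter (fun g : Fin (m - r) → Fin m => Function.Injective g),
          (Polynomial.C ((excCount g : ℚ) + 1) * Polynomial.X ^ excCount g
            + Polynomial.C ((m : ℚ) - excCount g) * Polynomial.X ^ (excCount g + 1)) := by
      rw [Jpoly, show (m + 1) - r = (m - r) + 1 from by omega]
      exact PP.key hsm
    have hJm : Jpoly m r
        = ∑ g ∈ univ.filter (fun g : Fin (m - r) → Fin m => Function.Injective g),
          (Polynomial.X : ℚ[X]) ^ excCount g := rfl
    rw [pPoly, pPoly, hJ, hJm, Finset.mul_sum, Finset.mul_sum,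
      Polynomial.derivative_sum, Finset.mul_sum, Finset.mul_sum,
      ← Finset.sum_add_distrib]
    apply Finset.sum_congr rfl
    intro g _
    rw [← pow_succ' (Polynomial.X : ℚ[X]) (excCount g), Polynomial.derivative_X_pow]
    simp only [Nat.add_sub_cancel]
    push_cast
    simp only [map_add, map_sub, map_one, map_natCast]
    ring
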